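/- Integrated variance bound for kernel density estimators (p = 2 case): Let d ≥ 1 and let K : ℝᵈ → ℝ be measurable with ∫ K(u)² du < ∞. For every probability density f on ℝᵈ, every h > 0 and every n ≥ 1, the kernel density estimator f̂_h(x) = (1/(n hᵈ)) Σ_{i=1}^n K((x − X_i)/h) based on X₁,…,Xₙ i.i.d. with density f satisfies ∫_{ℝᵈ} E[(f̂_h(x) − E f̂_h(x))²] dx ≤ (1/(n hᵈ)) ∫_{ℝᵈ} K(u)² du. -/

import Mathlib

open MeasureTheory Real Filter

/-- The Parzen–Rosenblatt kernel density estimator with kernel `K` and bandwidth `h`,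
based on the sample `X`. -/
noncomputable def kde {d n : ℕ} (K : (Fin d → ℝ) → ℝ) (h : ℝ)
    (X : Fin n → Fin d → ℝ) (x : Fin d → ℝ) : ℝ :=
  (1 / (n * h ^ d)) * ∑ i, K (fun j => (x j - X i j) / h)

/-- Variance computation for the sample mean of i.i.d. variables with density `f`. -/
lemma kde_inner_var {d : ℕ} (n : ℕ) (hn : 1 ≤ n) (g f : (Fin d → ℝ) → ℝ)
    (hgf : Integrable (fun z => g z * f z))
    (hg2f : Integrable (fun z => g z ^ 2 * f z))
    (hfint : Integrable f) (hf1 : (∫ z : Fin d → ℝ, f z) = 1) :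
    ∫ X : Fin n → Fin d → ℝ,
        ((1 / (n : ℝ)) * ∑ i, g (X i) - ∫ z : Fin d → ℝ, g z * f z) ^ 2 * ∏ i, f (X i)
      = (1 / (n : ℝ)) *
        ((∫ z : Fin d → ℝ, g z ^ 2 * f z) - (∫ z : Fin d → ℝ, g z * f z) ^ 2) := by
  have hn0 : (n : ℝ) ≠ 0 := Nat.cast_ne_zero.mpr (Nat.one_le_iff_ne_zero.mp hn)
  set c : ℝ := ∫ z : Fin d → ℝ, g z * f z with hc
  set m : ℝ := ∫ z : Fin d → ℝ, g z ^ 2 * f z with hm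
  have hint_cf : Integrable (fun t : Fin d → ℝ => c * f t) := hfint.const_mul c
  have hint_2cgf : Integrable (fun t : Fin d → ℝ => 2 * c * (g t * f t)) := hgf.const_mul (2 * c)
  have hint_c2f : Integrable (fun t : Fin d → ℝ => c ^ 2 * f t) := hfint.const_mul _
  have hA : Integrable (fun t : Fin d → ℝ => g t ^ 2 * f t - 2 * c * (g t * f t)) :=
    hg2f.sub hint_2cgf
  have hu_f : Integrable (fun t : Fin d → ℝ => (g t - c) * f t) := by
    have h1 : Integrable (fun t : Fin d → ℝ => g t * f t - c * f t) := hgf.sub hint_cf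
    exact h1.congr (Eventually.of_forall fun t => by ring)
  have hu2_f : Integrable (fun t : Fin d → ℝ => (g t - c) * (g t - c) * f t) := by
    have h1 : Integrable
        (fun t : Fin d → ℝ => g t ^ 2 * f t - 2 * c * (g t * f t) + c ^ 2 * f t) :=
      hA.add hint_c2f
    exact h1.congr (Eventually.of_forall fun t => by ring)
  have hIu : ∫ t : Fin d → ℝ, (g t - c) * f t = 0 := by
    have e1 : ∫ t : Fin d → ℝ, (g t - c) * f t
        = ∫ t : Fin d → ℝ, (g t * f t - c * f t) := by
      congr 1; funext t; ring
    rw [e1, integral_sub hgf hint_cf, integral_const_mul, hf1, ← hc]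
    ring
  have hIu2 : ∫ t : Fin d → ℝ, (g t - c) * (g t - c) * f t = m - c ^ 2 := by
    have e1 : ∫ t : Fin d → ℝ, (g t - c) * (g t - c) * f t
        = ∫ t : Fin d → ℝ, (g t ^ 2 * f t - 2 * c * (g t * f t) + c ^ 2 * f t) := by
      congr 1; funext t; ring
    rw [e1, integral_add hA hint_c2f, integral_sub hg2f hint_2cgf, integral_const_mul,
      integral_const_mul, hf1, ← hc, ← hm]
    ring
  set ψ : Fin n → Fin n → Fin n → (Fin d → ℝ) → ℝ :=
    fun i j k t => (if i = k then g t - c else 1) * (if j = k then g t - c else 1) * f t with hψ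
  have hψ_int : ∀ i j k, Integrable (ψ i j k) := by
    intro i j k
    by_cases hik : i = k <;> by_cases hjk : j = k
    · have e : ψ i j k = fun t => (g t - c) * (g t - c) * f t := by
        funext t; simp [hψ, hik, hjk]
      rw [e]; exact hu2_f
    · have e : ψ i j k = fun t => (g t - c) * f t := by
        funext t; simp [hψ, hik, hjk]
      rw [e]; exact hu_f
    · have e : ψ i j k = fun t => (g t - c) * f t := by
        funext t; simp [hψ, hik, hjk]
      rw [e]; exact hu_f
    · have e : ψ i j k = f := by
        funext t; simp [hψ, hik, hjk]
      rw [e]; exact hfint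
  have hpt : ∀ X : Fin n → Fin d → ℝ,
      ((1 / (n : ℝ)) * ∑ i, g (X i) - c) ^ 2 * ∏ i, f (X i)
        = (1 / (n : ℝ)) ^ 2 * ∑ i, ∑ j, ∏ k, ψ i j k (X k) := by
    intro X
    have h1 : ∀ i j : Fin n, ∏ k, ψ i j k (X k)
        = (g (X i) - c) * ((g (X j) - c) * ∏ k, f (X k)) := by
      intro i j
      simp only [hψ, Finset.prod_mul_distrib, Finset.prod_ite_eq, Finset.mem_univ, if_true]
      ring
    simp_rw [h1]
    have h2 : (1 / (n : ℝ)) * ∑ i, g (X i) - c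
        = (1 / (n : ℝ)) * ∑ i, (g (X i) - c) := by
      rw [Finset.sum_sub_distrib, Finset.sum_const, Finset.card_univ, Fintype.card_fin]
      push_cast
      field_simp
      rw [nsmul_eq_mul]
    rw [h2, mul_pow, sq (∑ i, (g (X i) - c)), Finset.sum_mul_sum, mul_assoc, Finset.sum_mul]
    congr 1
    refine Finset.sum_congr rfl fun i _ => ?_
    rw [Finset.sum_mul]
    exact Finset.sum_congr rfl fun j _ => by ring
  calc ∫ X : Fin n → Fin d → ℝ,
        ((1 / (n : ℝ)) * ∑ i, g (X i) - c) ^ 2 * ∏ i, f (X i)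
      = ∫ X : Fin n → Fin d → ℝ,
        (1 / (n : ℝ)) ^ 2 * ∑ i, ∑ j, ∏ k, ψ i j k (X k) := by
        exact integral_congr_ae (Eventually.of_forall hpt)
    _ = (1 / (n : ℝ)) ^ 2 * ∑ i, ∑ j,
          ∫ X : Fin n → Fin d → ℝ, ∏ k, ψ i j k (X k) := by
        rw [integral_const_mul]
        congr 1
        rw [integral_finset_sum (μ := volume) _ fun i _ =>
          integrable_finset_sum _ fun j _ => Integrable.fintype_prod fun k => hψ_int i j k]
        refine Finset.sum_congr rfl fun i _ => ?_
        exact integral_finset_sum _ fun j _ => Integrable.fintype_prod fun k => hψ_int i j k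
    _ = (1 / (n : ℝ)) ^ 2 * ∑ i, ∑ j, ∏ k, ∫ t : Fin d → ℝ, ψ i j k t := by
        congr 1
        refine Finset.sum_congr rfl fun i _ => Finset.sum_congr rfl fun j _ => ?_
        exact integral_fintype_prod_eq_prod fun k => ψ i j k
    _ = (1 / (n : ℝ)) ^ 2 * ∑ i : Fin n, ∑ j : Fin n, (if i = j then m - c ^ 2 else 0) := by
        congr 1
        refine Finset.sum_congr rfl fun i _ => Finset.sum_congr rfl fun j _ => ?_
        rcases eq_or_ne i j with rfl | hij
        · rw [if_pos rfl]
          have hval : ∀ k, (∫ t : Fin d → ℝ, ψ i i k t) = if i = k then m - c ^ 2 else 1 := by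
            intro k
            by_cases hik : i = k
            · subst hik
              rw [if_pos rfl]
              simpa [hψ] using hIu2
            · have e : (∫ t : Fin d → ℝ, ψ i i k t) = ∫ t : Fin d → ℝ, f t := by
                congr 1; funext t; simp [hψ, hik]
              rw [e, hf1, if_neg hik]
          simp_rw [hval]
          rw [Finset.prod_ite_eq]
          simp
        · rw [if_neg hij]
          refine Finset.prod_eq_zero (Finset.mem_univ i) ?_
          have hji : ¬ (j = i) := fun e => hij e.symm
          have e : (∫ t : Fin d → ℝ, ψ i j i t) = ∫ t : Fin d → ℝ, (g t - c) * f t := by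
            congr 1; funext t; simp [hψ, hji]
          rw [e, hIu]
    _ = (1 / (n : ℝ)) * (m - c ^ 2) := by
        simp_rw [Finset.sum_ite_eq, Finset.mem_univ, if_true, Finset.sum_const,
          Finset.card_univ, Fintype.card_fin, nsmul_eq_mul]
        field_simp

/-- integrated variance bound for kernel density estimators, `p = 2`.
For a square-integrable kernel `K`, any probability density `f`, any `h > 0` and `n ≥ 1`,
`∫ E[(f̂_h(x) − E f̂_h(x))²] dx ≤ (1/(n h^d)) ∫ K²`. -/
theorem kernel_density_estimator_integrated_variance_bound
    (d : ℕ) (hd : 1 ≤ d)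
    (K : (Fin d → ℝ) → ℝ) (hKmeas : Measurable K)
    (hK2 : Integrable (fun u : Fin d → ℝ => K u ^ 2))
    (f : (Fin d → ℝ) → ℝ) (hfmeas : Measurable f)
    (hf0 : ∀ᵐ x : Fin d → ℝ, 0 ≤ f x) (hf1 : (∫ x : Fin d → ℝ, f x) = 1)
    (h : ℝ) (hh : 0 < h) (n : ℕ) (hn : 1 ≤ n) :
    (∫ x : Fin d → ℝ,
      ∫ X : Fin n → Fin d → ℝ,
        (kde K h X x -
          (1 / h ^ d) * (∫ z : Fin d → ℝ, K (fun i => (x i - z i) / h) * f z)) ^ 2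
          * ∏ i, f (X i))
      ≤ (1 / ((n : ℝ) * h ^ d)) * ∫ u : Fin d → ℝ, K u ^ 2 := by
  have hn0 : (n : ℝ) ≠ 0 := Nat.cast_ne_zero.mpr (Nat.one_le_iff_ne_zero.mp hn)
  have hnpos : (0 : ℝ) < n := by positivity
  have hh0 : h ≠ 0 := hh.ne'
  have hhd : (0 : ℝ) < h ^ d := pow_pos hh d
  have hfint : Integrable f := by
    by_contra hc
    rw [integral_undef hc] at hf1
    exact one_ne_zero hf1.symm
  have hrw : ∀ a b : Fin d → ℝ, (fun i => (a i - b i) / h) = h⁻¹ • (a - b) := by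
    intro a b; funext i
    simp [div_eq_inv_mul]
  simp only [kde, hrw]
  have hfinrank : Module.finrank ℝ (Fin d → ℝ) = d := Module.finrank_fin_fun ℝ
  -- change of variables for the squared kernel
  have hcomp : ∀ z : Fin d → ℝ,
      Integrable (fun x : Fin d → ℝ => K (h⁻¹ • (x - z)) ^ 2) := by
    intro z
    have h1 : Integrable (fun x : Fin d → ℝ => K (h⁻¹ • x) ^ 2) :=
      (integrable_comp_smul_iff volume (fun u => K u ^ 2) (inv_ne_zero hh0)).2 hK2
    exact h1.comp_sub_right z
  have hIval : ∀ z : Fin d → ℝ,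
      (∫ x : Fin d → ℝ, K (h⁻¹ • (x - z)) ^ 2) = h ^ d * ∫ u : Fin d → ℝ, K u ^ 2 := by
    intro z
    rw [integral_sub_right_eq_self (fun y : Fin d → ℝ => K (h⁻¹ • y) ^ 2) z]
    rw [Measure.integral_comp_smul_of_nonneg volume (fun u : Fin d → ℝ => K u ^ 2) h⁻¹
      (hR := inv_nonneg.2 hh.le), hfinrank]
    rw [inv_pow, inv_inv, smul_eq_mul]
  -- joint integrability
  have hKmeas2 : Measurable fun p : (Fin d → ℝ) × (Fin d → ℝ) => K (h⁻¹ • (p.1 - p.2)) ^ 2 :=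
    (hKmeas.comp ((measurable_fst.sub measurable_snd).const_smul h⁻¹)).pow_const 2
  set G : (Fin d → ℝ) × (Fin d → ℝ) → ℝ :=
    fun p => K (h⁻¹ • (p.1 - p.2)) ^ 2 * f p.2 with hGdef
  have hGmeas : AEStronglyMeasurable G ((volume : Measure (Fin d → ℝ)).prod volume) :=
    (hKmeas2.mul (hfmeas.comp measurable_snd)).aestronglyMeasurable
  have hG : Integrable G ((volume : Measure (Fin d → ℝ)).prod volume) := by
    rw [integrable_prod_iff' hGmeas]
    constructor
    · exact Eventually.of_forall fun z => (hcomp z).mul_const (f z)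
    · have e : (fun z : Fin d → ℝ => ∫ x : Fin d → ℝ, ‖G (x, z)‖)
          = fun z => (h ^ d * ∫ u : Fin d → ℝ, K u ^ 2) * ‖f z‖ := by
        funext z
        have e2 : (fun x : Fin d → ℝ => ‖G (x, z)‖)
            = fun x => K (h⁻¹ • (x - z)) ^ 2 * ‖f z‖ := by
          funext x
          rw [hGdef, norm_mul, Real.norm_eq_abs (K _ ^ 2), abs_of_nonneg (sq_nonneg _)]
        rw [e2, integral_mul_const, hIval z]
      rw [e]
      exact hfint.norm.const_mul _
  have hae1 : ∀ᵐ x : Fin d → ℝ,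
      Integrable (fun z : Fin d → ℝ => K (h⁻¹ • (x - z)) ^ 2 * f z) := hG.prod_right_ae
  have hae2 : ∀ᵐ x : Fin d → ℝ,
      Integrable (fun z : Fin d → ℝ => K (h⁻¹ • (x - z)) * f z) := by
    filter_upwards [hae1] with x hx
    have hmeas : AEStronglyMeasurable (fun z : Fin d → ℝ => K (h⁻¹ • (x - z)) * f z) volume := by
      exact ((hKmeas.comp ((measurable_const.sub measurable_id).const_smul h⁻¹)).mul
        hfmeas).aestronglyMeasurable
    refine Integrable.mono' (((hx.add hfint).const_mul (1 / 2))) hmeas ?_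
    filter_upwards [hf0] with z hz
    simp only [Pi.add_apply]
    rw [norm_mul, Real.norm_eq_abs, Real.norm_eq_abs, abs_of_nonneg hz]
    nlinarith [sq_abs (K (h⁻¹ • (x - z))), mul_nonneg (sq_nonneg (|K (h⁻¹ • (x - z))| - 1)) hz,
      abs_nonneg (K (h⁻¹ • (x - z)))]
  -- the dominating function
  set B : (Fin d → ℝ) → ℝ :=
    fun x => (1 / ((n : ℝ) * h ^ d * h ^ d)) *
      ∫ z : Fin d → ℝ, K (h⁻¹ • (x - z)) ^ 2 * f z with hBdef
  have hBint : Integrable B := by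
    rw [hBdef]
    exact (hG.integral_prod_left).const_mul _
  have hBval : (∫ x : Fin d → ℝ, B x)
      = (1 / ((n : ℝ) * h ^ d)) * ∫ u : Fin d → ℝ, K u ^ 2 := by
    rw [hBdef]
    rw [integral_const_mul]
    have hswap : (∫ x : Fin d → ℝ, ∫ z : Fin d → ℝ, K (h⁻¹ • (x - z)) ^ 2 * f z)
        = ∫ z : Fin d → ℝ, ∫ x : Fin d → ℝ, K (h⁻¹ • (x - z)) ^ 2 * f z :=
      integral_integral_swap hG
    rw [hswap]
    have e : (fun z : Fin d → ℝ => ∫ x : Fin d → ℝ, K (h⁻¹ • (x - z)) ^ 2 * f z)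
        = fun z => (h ^ d * ∫ u : Fin d → ℝ, K u ^ 2) * f z := by
      funext z
      rw [integral_mul_const, hIval z]
    rw [e, integral_const_mul, hf1, mul_one]
    field_simp
  -- a.e. nonnegativity of the product density
  have hprodnn : ∀ᵐ X : Fin n → Fin d → ℝ, ∀ i, 0 ≤ f (X i) := by
    rw [ae_all_iff]
    intro i
    have hnull : (volume : Measure (Fin d → ℝ)) {t | ¬ 0 ≤ f t} = 0 := hf0
    have : (volume : Measure (Fin n → Fin d → ℝ)) {X | ¬ 0 ≤ f (X i)} = 0 := by
      rw [volume_pi]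
      exact Measure.pi_eval_preimage_null (μ := fun _ : Fin n => (volume : Measure (Fin d → ℝ))) (i := i) hnull
    exact this
  have h0 : ∀ x : Fin d → ℝ, 0 ≤
      ∫ X : Fin n → Fin d → ℝ,
        ((1 / ((n : ℝ) * h ^ d)) * ∑ i, K (h⁻¹ • (x - X i)) -
          (1 / h ^ d) * (∫ z : Fin d → ℝ, K (h⁻¹ • (x - z)) * f z)) ^ 2 * ∏ i, f (X i) := by
    intro x
    refine integral_nonneg_of_ae ?_
    filter_upwards [hprodnn] with X hX
    exact mul_nonneg (sq_nonneg _) (Finset.prod_nonneg fun i _ => hX i)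
  have hle : ∀ᵐ x : Fin d → ℝ,
      (∫ X : Fin n → Fin d → ℝ,
        ((1 / ((n : ℝ) * h ^ d)) * ∑ i, K (h⁻¹ • (x - X i)) -
          (1 / h ^ d) * (∫ z : Fin d → ℝ, K (h⁻¹ • (x - z)) * f z)) ^ 2 * ∏ i, f (X i))
        ≤ B x := by
    filter_upwards [hae1, hae2] with x hx1 hx2
    set g : (Fin d → ℝ) → ℝ := fun z => K (h⁻¹ • (x - z)) with hgdef
    set c : ℝ := ∫ z : Fin d → ℝ, g z * f z with hcdef
    set m : ℝ := ∫ z : Fin d → ℝ, g z ^ 2 * f z with hmdef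
    have hpt : ∀ X : Fin n → Fin d → ℝ,
        ((1 / ((n : ℝ) * h ^ d)) * ∑ i, g (X i) - (1 / h ^ d) * c) ^ 2 * ∏ i, f (X i)
          = (1 / h ^ d) ^ 2 *
            (((1 / (n : ℝ)) * ∑ i, g (X i) - c) ^ 2 * ∏ i, f (X i)) := by
      intro X
      have e : (1 / ((n : ℝ) * h ^ d)) * ∑ i, g (X i) - (1 / h ^ d) * c
          = (1 / h ^ d) * ((1 / (n : ℝ)) * ∑ i, g (X i) - c) := by
        field_simp
      rw [e, mul_pow]
      ring
    calc (∫ X : Fin n → Fin d → ℝ,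
          ((1 / ((n : ℝ) * h ^ d)) * ∑ i, g (X i) - (1 / h ^ d) * c) ^ 2 * ∏ i, f (X i))
        = ∫ X : Fin n → Fin d → ℝ, (1 / h ^ d) ^ 2 *
            (((1 / (n : ℝ)) * ∑ i, g (X i) - c) ^ 2 * ∏ i, f (X i)) :=
          integral_congr_ae (Eventually.of_forall hpt)
      _ = (1 / h ^ d) ^ 2 * ((1 / (n : ℝ)) * (m - c ^ 2)) := by
          rw [integral_const_mul, kde_inner_var n hn g f hx2 hx1 hfint hf1]
      _ ≤ B x := by
          rw [hBdef]
          have hb : (1 / h ^ d : ℝ) ^ 2 * ((1 / (n : ℝ)) * (m - c ^ 2))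
              = (1 / ((n : ℝ) * h ^ d * h ^ d)) * (m - c ^ 2) := by
            rw [← mul_assoc]
            congr 1
            rw [div_pow, one_pow, div_mul_div_comm, one_mul]
            congr 1
            ring
          rw [hb]
          have hmono : m - c ^ 2 ≤ m := sub_le_self m (sq_nonneg c)
          have hpos : (0 : ℝ) < 1 / ((n : ℝ) * h ^ d * h ^ d) := by positivity
          exact mul_le_mul_of_nonneg_left hmono hpos.le
  calc (∫ x : Fin d → ℝ,
        ∫ X : Fin n → Fin d → ℝ,
          ((1 / ((n : ℝ) * h ^ d)) * ∑ i, K (h⁻¹ • (x - X i)) -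
            (1 / h ^ d) * (∫ z : Fin d → ℝ, K (h⁻¹ • (x - z)) * f z)) ^ 2 * ∏ i, f (X i))
      ≤ ∫ x : Fin d → ℝ, B x :=
        integral_mono_of_nonneg (Eventually.of_forall h0) hBint hle
    _ = (1 / ((n : ℝ) * h ^ d)) * ∫ u : Fin d → ℝ, K u ^ 2 := hBval
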